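/- With 𝒫 = P̃ᵀ·(P̃·P̃ᵀ)†·P̃, K symmetric positive definite, μ > 0, S = K·(I−𝒫)·K + μ·K, and Q = (I−𝒫) − (I−𝒫)·K·S⁻¹·K·(I−𝒫), the matrix Q is symmetric positive semidefinite and satisfies I ⪰ I−𝒫 ⪰ Q ⪰ 0 in the Loewner order. -/

import Mathlib

open Matrix

/-- `B` is the Moore–Penrose pseudoinverse of `A` (the four Penrose conditions). -/
def IsMoorePenrose {n p : Type*} [Fintype n] [Fintype p]
    (A : Matrix n p ℝ) (B : Matrix p n ℝ) : Prop :=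
  A * B * A = A ∧ B * A * B = B ∧ (A * B)ᵀ = A * B ∧ (B * A)ᵀ = B * A

/-- Uniqueness of the Moore–Penrose pseudoinverse. -/
lemma mp_unique {n p : Type*} [Fintype n] [Fintype p]
    (A : Matrix n p ℝ) (B C : Matrix p n ℝ)
    (hB : IsMoorePenrose A B) (hC : IsMoorePenrose A C) : B = C := by
  obtain ⟨hB1, hB2, hB3, hB4⟩ := hB
  obtain ⟨hC1, hC2, hC3, hC4⟩ := hC
  have h1 : B = B * A * C := by
    calc B = B * A * B := hB2.symm
      _ = B * (A * B)ᵀ := by rw [hB3, Matrix.mul_assoc]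
      _ = B * (A * C * A * B)ᵀ := by rw [hC1]
      _ = B * ((A * B)ᵀ * (A * C)ᵀ) := by
            rw [← transpose_mul]; simp only [Matrix.mul_assoc]
      _ = B * ((A * B) * (A * C)) := by rw [hB3, hC3]
      _ = B * A * B * (A * C) := by simp only [Matrix.mul_assoc]
      _ = B * (A * C) := by rw [hB2]
      _ = B * A * C := by rw [Matrix.mul_assoc]
  have h2 : C = B * A * C := by
    calc C = C * A * C := hC2.symm
      _ = (C * A)ᵀ * C := by rw [hC4]
      _ = (C * (A * B * A))ᵀ * C := by rw [hB1]
      _ = ((B * A)ᵀ * (C * A)ᵀ) * C := by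
            rw [← transpose_mul]; simp only [Matrix.mul_assoc]
      _ = ((B * A) * (C * A)) * C := by rw [hB4, hC4]
      _ = (B * A) * (C * A * C) := by rw [Matrix.mul_assoc]
      _ = B * A * C := by rw [hC2]
  rw [← h1] at h2
  exact h2.symm

/-- With `𝒫 = P̃ᵀ(P̃P̃ᵀ)†P̃`, `S = K(I−𝒫)K + μK` and
`Q = (I−𝒫) − (I−𝒫)·K·S⁻¹·K·(I−𝒫)`, the matrix `Q` is symmetric positive
semidefinite and `I ⪰ I−𝒫 ⪰ Q ⪰ 0` in the Loewner order. -/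
theorem stmt4 (d m : ℕ) (P : Matrix (Fin (d + 1)) (Fin m) ℝ)
    (G : Matrix (Fin (d + 1)) (Fin (d + 1)) ℝ) (hG : IsMoorePenrose (P * Pᵀ) G)
    (K : Matrix (Fin m) (Fin m) ℝ) (hK : K.PosDef) (μ : ℝ) (hμ : 0 < μ)
    (Proj : Matrix (Fin m) (Fin m) ℝ) (hProj : Proj = Pᵀ * G * P)
    (S : Matrix (Fin m) (Fin m) ℝ) (hS : S = K * (1 - Proj) * K + μ • K)
    (Q : Matrix (Fin m) (Fin m) ℝ)
    (hQ : Q = (1 - Proj) - (1 - Proj) * K * S⁻¹ * K * (1 - Proj)) :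
    Qᵀ = Q ∧ Q.PosSemidef ∧ ((1 - Proj) - Q).PosSemidef ∧
      ((1 : Matrix (Fin m) (Fin m) ℝ) - (1 - Proj)).PosSemidef := by
  -- G is symmetric (pseudoinverse of symmetric matrix)
  obtain ⟨h1, h2, h3, h4⟩ := hG
  have hG : IsMoorePenrose (P * Pᵀ) G := ⟨h1, h2, h3, h4⟩
  have hGt : IsMoorePenrose (P * Pᵀ) Gᵀ := by
    refine ⟨?_, ?_, ?_, ?_⟩
    · simpa [Matrix.mul_assoc] using congrArg transpose h1
    · simpa [Matrix.mul_assoc] using congrArg transpose h2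
    · simpa [Matrix.mul_assoc] using h4.symm
    · simpa [Matrix.mul_assoc] using h3.symm
  have hGG : Gᵀ = G := mp_unique (P * Pᵀ) Gᵀ G hGt hG
  -- Projection properties
  have hPt : Projᵀ = Proj := by
    rw [hProj, transpose_mul, transpose_mul, transpose_transpose, hGG, Matrix.mul_assoc]
  have h2' : G * (P * (Pᵀ * G)) = G := by simpa [Matrix.mul_assoc] using h2
  have hPP : Proj * Proj = Proj := by
    rw [hProj]
    calc Pᵀ * G * P * (Pᵀ * G * P) = Pᵀ * (G * (P * (Pᵀ * G)) * P) := by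
          simp only [Matrix.mul_assoc]
      _ = Pᵀ * (G * P) := by rw [h2']
      _ = Pᵀ * G * P := by rw [Matrix.mul_assoc]
  set E : Matrix (Fin m) (Fin m) ℝ := 1 - Proj with hE
  have hEt : Eᵀ = E := by rw [hE, transpose_sub, transpose_one, hPt]
  have hEE : E * E = E := by
    rw [hE, Matrix.sub_mul, Matrix.mul_sub, Matrix.mul_sub, hPP]
    simp
  have hEH : Eᴴ = E := by rw [conjTranspose_eq_transpose_of_trivial, hEt]
  have hKH : Kᴴ = K := hK.1
  have hKt : Kᵀ = K := by rw [← conjTranspose_eq_transpose_of_trivial, hKH]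
  have hEpsd : E.PosSemidef := by
    have := posSemidef_conjTranspose_mul_self E
    rwa [hEH, hEE] at this
  -- S is positive definite
  set C : Matrix (Fin m) (Fin m) ℝ := μ • K with hC
  have hCpd : C.PosDef := by
    refine ⟨?_, fun x hx => ?_⟩
    · show Cᴴ = C
      rw [hC]
      simp [hKH, hKt]
    · rw [hC]
      have h := smul_pos hμ (hK.2 hx)
      simp only [smul_eq_mul, Finsupp.mul_sum] at h
      convert h using 1
      simp only [Matrix.smul_apply, smul_eq_mul]
      congr 1; funext i xi; congr 1; funext j xj; ring
  have hKEK : (K * E * K).PosSemidef := by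
    have := hEpsd.mul_mul_conjTranspose_same K
    rwa [hKH] at this
  have hSpd : S.PosDef := by rw [hS]; exact Matrix.PosDef.posSemidef_add hKEK hCpd
  have hSdet : IsUnit S.det := (Matrix.isUnit_iff_isUnit_det S).mp hSpd.isUnit
  set X : Matrix (Fin m) (Fin m) ℝ := S⁻¹ with hX
  have hXpd : X.PosDef := hSpd.inv
  have hXH : Xᴴ = X := hXpd.1
  have hXt : Xᵀ = X := by rw [← conjTranspose_eq_transpose_of_trivial, hXH]
  have hXS : X * S = 1 := nonsing_inv_mul S hSdet
  -- Key algebraic identity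
  have hC1 : (E - K * (X * (K * E)))ᴴ = E - ((E * K) * X) * K := by
    rw [conjTranspose_sub, hEH, conjTranspose_mul, conjTranspose_mul, conjTranspose_mul,
      hEH, hKH, hXH]
  have hC2 : (X * (K * E))ᴴ = (E * K) * X := by
    rw [conjTranspose_mul, conjTranspose_mul, hEH, hKH, hXH]
  have hcollapse : X * (S * (X * (K * E))) = X * (K * E) := by
    rw [← Matrix.mul_assoc, hXS, Matrix.one_mul]
  have key : ((E - K * (X * (K * E)))ᴴ * E) * (E - K * (X * (K * E)))
      + ((X * (K * E))ᴴ * C) * (X * (K * E)) = Q := by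
    rw [hC1, hC2]
    calc ((E - ((E * K) * X) * K) * E) * (E - K * (X * (K * E)))
          + (((E * K) * X) * C) * (X * (K * E))
        = (E * E) * E - (E * E) * (K * (X * (K * E))) - (((E * K) * X) * K) * (E * E)
            + (E * K) * (X * ((K * E * K + C) * (X * (K * E)))) := by noncomm_ring
      _ = E - E * (K * (X * (K * E))) - (((E * K) * X) * K) * E
            + (E * K) * (X * (S * (X * (K * E)))) := by rw [hEE, hEE, ← hS]
      _ = E - E * (K * (X * (K * E))) - (((E * K) * X) * K) * E
            + (E * K) * (X * (K * E)) := by rw [hcollapse]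
      _ = E - (((E * K) * X) * K) * E := by noncomm_ring
      _ = Q := hQ.symm
  have hQpsd : Q.PosSemidef := by
    rw [← key]
    exact (hEpsd.conjTranspose_mul_mul_same _).add
      (hCpd.posSemidef.conjTranspose_mul_mul_same _)
  have hQsub : (E - Q).PosSemidef := by
    have h := hXpd.posSemidef.conjTranspose_mul_mul_same (K * E)
    have heq : (K * E)ᴴ * X * (K * E) = E - Q := by
      rw [hQ, sub_sub_cancel, conjTranspose_mul, hEH, hKH]
      noncomm_ring
    rwa [heq] at h
  have hQt : Qᵀ = Q := by
    rw [hQ, transpose_sub, hEt]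
    congr 1
    rw [transpose_mul, transpose_mul, transpose_mul, transpose_mul, hEt, hKt, hXt]
    noncomm_ring
  refine ⟨hQt, hQpsd, hQsub, ?_⟩
  have h1E : (1 : Matrix (Fin m) (Fin m) ℝ) - E = Proj := by rw [hE, sub_sub_cancel]
  rw [h1E]
  have := posSemidef_conjTranspose_mul_self Proj
  rwa [conjTranspose_eq_transpose_of_trivial, hPt, hPP] at this
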